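/- A convex quadrilateral is uniquely determined up to congruence by its four interior angles (in cyclic order), the length of one specified side, and its perimeter: if two convex quadrilaterals have the same cyclically labeled interior angles, the same length for a corresponding side, and equal perimeters, then they are congruent. -/

import Mathlib

open Real EuclideanGeometry

/-- The cross product of two planar vectors. -/
def cross2 (a b : EuclideanSpace ℝ (Fin 2)) : ℝ := a 0 * b 1 - a 1 * b 0

/-- `v` lists the vertices of a convex polygon in counterclockwise cyclic order. -/
def IsConvexPolygon {n : ℕ} [NeZero n] (v : Fin n → EuclideanSpace ℝ (Fin 2)) : Prop :=
  (∀ i j : Fin n, 0 ≤ cross2 (v (i + 1) - v i) (v j - v i)) ∧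
  (∀ i : Fin n, 0 < cross2 (v (i + 1) - v i) (v (i + 2) - v (i + 1)))

/-- Compatibility: the complex absolute value as an `AbsoluteValue`. -/
noncomputable def Complex.abs : AbsoluteValue ℂ ℝ where
  toFun z := ‖z‖
  map_mul' := norm_mul
  nonneg' := norm_nonneg
  eq_zero' _ := norm_eq_zero
  add_le' := norm_add_le

theorem Complex.norm_eq_abs (z : ℂ) : ‖z‖ = Complex.abs z := rfl

theorem Complex.abs_ofReal (r : ℝ) : Complex.abs (r : ℂ) = |r| := Complex.norm_real r

theorem Complex.abs_conj (z : ℂ) : Complex.abs ((starRingEnd ℂ) z) = Complex.abs z :=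
  Complex.norm_conj z

theorem Complex.sq_abs (z : ℂ) : Complex.abs z ^ 2 = Complex.normSq z := Complex.sq_norm z

theorem Complex.normSq_eq_abs (z : ℂ) : Complex.normSq z = Complex.abs z ^ 2 :=
  Complex.normSq_eq_norm_sq z

namespace QuadAux

open Complex

private lemma kernel {sr si tr ti x y z : ℝ} (hs : sr^2 + si^2 = 1) (ht : tr^2 + ti^2 = 1)
    (hsi : si < 0) (hti : 0 < ti) (h1 : x*sr + y + z*tr = 0) (h2 : x*si + z*ti = 0)
    (h3 : x + y + z = 0) : x = 0 ∧ y = 0 ∧ z = 0 := by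
  have hsr : sr < 1 := by nlinarith
  have htr : tr < 1 := by nlinarith
  have hzK : z * (ti*(sr-1) - si*(tr-1)) = 0 := by
    linear_combination (-si) * h1 + (sr - 1) * h2 + si * h3
  have hK : ti*(sr-1) - si*(tr-1) < 0 := by nlinarith
  have hz : z = 0 := by
    rcases mul_eq_zero.1 hzK with h | h
    · exact h
    · exact absurd h (ne_of_lt hK)
  have hx : x = 0 := by
    have h2' : x * si = 0 := by rw [hz] at h2; linarith
    rcases mul_eq_zero.1 h2' with h | h
    · exact h
    · exact absurd h (ne_of_lt hsi)
  refine ⟨hx, by linarith, hz⟩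

private lemma dir_eq {z p z' p' : ℂ} (hz : z ≠ 0) (hp : p ≠ 0) (hz' : z' ≠ 0) (hp' : p' ≠ 0)
    (hang : InnerProductGeometry.angle z p = InnerProductGeometry.angle z' p')
    (h1 : 0 < ((starRingEnd ℂ) p * z).im) (h2 : 0 < ((starRingEnd ℂ) p' * z').im) :
    ((starRingEnd ℂ) p * z) / ((Complex.abs p * Complex.abs z : ℝ) : ℂ) =
      ((starRingEnd ℂ) p' * z') / ((Complex.abs p' * Complex.abs z' : ℝ) : ℂ) := by
  set q := ((starRingEnd ℂ) p * z) / ((Complex.abs p * Complex.abs z : ℝ) : ℂ) with hq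
  set q' := ((starRingEnd ℂ) p' * z') / ((Complex.abs p' * Complex.abs z' : ℝ) : ℂ) with hq'
  have hpz : (0:ℝ) < Complex.abs p * Complex.abs z :=
    mul_pos (AbsoluteValue.pos _ hp) (AbsoluteValue.pos _ hz)
  have hpz' : (0:ℝ) < Complex.abs p' * Complex.abs z' :=
    mul_pos (AbsoluteValue.pos _ hp') (AbsoluteValue.pos _ hz')
  have hre : q.re = Real.cos (InnerProductGeometry.angle z p) := by
    rw [InnerProductGeometry.angle_comm, InnerProductGeometry.cos_angle, Complex.inner,
      hq, div_ofReal_re]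
    rw [Complex.norm_eq_abs, Complex.norm_eq_abs]
    rw [mul_comm z]
  have hre' : q'.re = Real.cos (InnerProductGeometry.angle z' p') := by
    rw [InnerProductGeometry.angle_comm, InnerProductGeometry.cos_angle, Complex.inner,
      hq', div_ofReal_re]
    rw [Complex.norm_eq_abs, Complex.norm_eq_abs]
    rw [mul_comm z']
  have hrr : q.re = q'.re := by rw [hre, hre', hang]
  have him : 0 < q.im := by rw [hq, div_ofReal_im]; positivity
  have him' : 0 < q'.im := by rw [hq', div_ofReal_im]; positivity
  have habs : Complex.abs q = 1 := by
    rw [hq, map_div₀, map_mul, Complex.abs_ofReal, abs_conj]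
    rw [abs_of_pos hpz]
    field_simp
    exact div_self hpz.ne'
  have habs' : Complex.abs q' = 1 := by
    rw [hq', map_div₀, map_mul, Complex.abs_ofReal, abs_conj]
    rw [abs_of_pos hpz']
    field_simp
    exact div_self hpz'.ne'
  have hs1 : q.re^2 + q.im^2 = 1 := by
    have := Complex.sq_abs q; rw [habs, Complex.normSq_apply] at this
    nlinarith [this]
  have hs2 : q'.re^2 + q'.im^2 = 1 := by
    have := Complex.sq_abs q'; rw [habs', Complex.normSq_apply] at this
    nlinarith [this]
  have h4 : (q.im - q'.im) * (q.im + q'.im) = 0 := by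
    linear_combination hs1 - hs2 - (q.re + q'.re) * hrr
  have : q.im = q'.im := by
    rcases mul_eq_zero.1 h4 with h | h
    · linarith
    · linarith
  exact Complex.ext hrr this

private lemma unit_sq {q : ℂ} (h : Complex.abs q = 1) : q.re^2 + q.im^2 = 1 := by
  have := Complex.sq_abs q; rw [h, Complex.normSq_apply] at this
  nlinarith [this]

private lemma imswap (x y : ℂ) :
    ((starRingEnd ℂ) x * (-y)).im = ((starRingEnd ℂ) y * x).im := by
  simp [Complex.mul_im]; ring

private lemma keyC (A B C D A' B' C' D' : ℂ)
    (cv0 : 0 < ((starRingEnd ℂ) (B - A) * (C - B)).im)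
    (cv1 : 0 < ((starRingEnd ℂ) (C - B) * (D - C)).im)
    (cv2 : 0 < ((starRingEnd ℂ) (D - C) * (A - D)).im)
    (cv3 : 0 < ((starRingEnd ℂ) (A - D) * (B - A)).im)
    (cw0 : 0 < ((starRingEnd ℂ) (B' - A') * (C' - B')).im)
    (cw1 : 0 < ((starRingEnd ℂ) (C' - B') * (D' - C')).im)
    (cw3 : 0 < ((starRingEnd ℂ) (A' - D') * (B' - A')).im)
    (a0 : InnerProductGeometry.angle (D - A) (B - A) =
      InnerProductGeometry.angle (D' - A') (B' - A'))
    (a1 : InnerProductGeometry.angle (A - B) (C - B) =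
      InnerProductGeometry.angle (A' - B') (C' - B'))
    (a2 : InnerProductGeometry.angle (B - C) (D - C) =
      InnerProductGeometry.angle (B' - C') (D' - C'))
    (hside : Complex.abs (B - A) = Complex.abs (B' - A'))
    (hper : Complex.abs (B-A) + Complex.abs (C-B) + Complex.abs (D-C) + Complex.abs (A-D)
      = Complex.abs (B'-A') + Complex.abs (C'-B') + Complex.abs (D'-C') + Complex.abs (A'-D')) :
    ∃ μ t : ℂ, Complex.abs μ = 1 ∧ A' = μ*A + t ∧ B' = μ*B + t ∧ C' = μ*C + t ∧ D' = μ*D + t := by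
  -- edges nonzero
  have ne0 : B - A ≠ 0 := by intro h; rw [h] at cv0; simp at cv0
  have ne1 : C - B ≠ 0 := by intro h; rw [h] at cv1; simp at cv1
  have ne2 : D - C ≠ 0 := by intro h; rw [h] at cv2; simp at cv2
  have ne3 : A - D ≠ 0 := by intro h; rw [h] at cv3; simp at cv3
  have ne0' : B' - A' ≠ 0 := by intro h; rw [h] at cw0; simp at cw0
  have ne1' : C' - B' ≠ 0 := by intro h; rw [h] at cw1; simp at cw1
  have ne3' : A' - D' ≠ 0 := by intro h; rw [h] at cw3; simp at cw3
  have ne2' : D' - C' ≠ 0 := by intro h; rw [h] at cw1; simp at cw1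
  have ne0n : A - B ≠ 0 := fun h => ne0 (by rw [show B - A = -(A-B) by ring, h, neg_zero])
  have ne1n : B - C ≠ 0 := fun h => ne1 (by rw [show C - B = -(B-C) by ring, h, neg_zero])
  have ne3n : D - A ≠ 0 := fun h => ne3 (by rw [show A - D = -(D-A) by ring, h, neg_zero])
  have ne0n' : A' - B' ≠ 0 := fun h => ne0' (by rw [show B' - A' = -(A'-B') by ring, h, neg_zero])
  have ne1n' : B' - C' ≠ 0 := fun h => ne1' (by rw [show C' - B' = -(B'-C') by ring, h, neg_zero])
  have ne3n' : D' - A' ≠ 0 := fun h => ne3' (by rw [show A' - D' = -(D'-A') by ring, h, neg_zero])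
  -- cross facts in the form needed by dir_eq
  have Xv0 : 0 < ((starRingEnd ℂ) (B - A) * (D - A)).im := by
    rw [show D - A = -(A - D) by ring, imswap]; exact cv3
  have Xv1 : 0 < ((starRingEnd ℂ) (C - B) * (A - B)).im := by
    rw [show A - B = -(B - A) by ring, imswap]; exact cv0
  have Xv2 : 0 < ((starRingEnd ℂ) (D - C) * (B - C)).im := by
    rw [show B - C = -(C - B) by ring, imswap]; exact cv1
  have Xw0 : 0 < ((starRingEnd ℂ) (B' - A') * (D' - A')).im := by
    rw [show D' - A' = -(A' - D') by ring, imswap]; exact cw3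
  have Xw1 : 0 < ((starRingEnd ℂ) (C' - B') * (A' - B')).im := by
    rw [show A' - B' = -(B' - A') by ring, imswap]; exact cw0
  have Xw2 : 0 < ((starRingEnd ℂ) (D' - C') * (B' - C')).im := by
    rw [show B' - C' = -(C' - B') by ring, imswap]; exact cw1
  have Eq0 := dir_eq ne3n ne0 ne3n' ne0' a0 Xv0 Xw0
  have Eq1 := dir_eq ne0n ne1 ne0n' ne1' a1 Xv1 Xw1
  have Eq2 := dir_eq ne1n ne2 ne1n' ne2' a2 Xv2 Xw2
  rw [Complex.abs.map_sub D A, Complex.abs.map_sub D' A'] at Eq0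
  rw [Complex.abs.map_sub A B, Complex.abs.map_sub A' B'] at Eq1
  rw [Complex.abs.map_sub B C, Complex.abs.map_sub B' C'] at Eq2
  -- lengths
  set ℓ := Complex.abs (B - A) with hld
  set a := Complex.abs (C - B) with had
  set c := Complex.abs (D - C) with hcd
  set b := Complex.abs (A - D) with hbd
  set ℓ' := Complex.abs (B' - A') with hld'
  set a' := Complex.abs (C' - B') with had'
  set c' := Complex.abs (D' - C') with hcd'
  set b' := Complex.abs (A' - D') with hbd'
  have hl : 0 < ℓ := AbsoluteValue.pos _ ne0
  have ha : 0 < a := AbsoluteValue.pos _ ne1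
  have hc : 0 < c := AbsoluteValue.pos _ ne2
  have hb : 0 < b := AbsoluteValue.pos _ ne3
  have hl' : 0 < ℓ' := AbsoluteValue.pos _ ne0'
  have ha' : 0 < a' := AbsoluteValue.pos _ ne1'
  have hc' : 0 < c' := AbsoluteValue.pos _ ne2'
  have hb' : 0 < b' := AbsoluteValue.pos _ ne3'
  have hlC : (ℓ:ℂ) ≠ 0 := Complex.ofReal_ne_zero.mpr hl.ne'
  have haC : (a:ℂ) ≠ 0 := Complex.ofReal_ne_zero.mpr ha.ne'
  have hcC : (c:ℂ) ≠ 0 := Complex.ofReal_ne_zero.mpr hc.ne'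
  have hbC : (b:ℂ) ≠ 0 := Complex.ofReal_ne_zero.mpr hb.ne'
  have hlC' : (ℓ':ℂ) ≠ 0 := Complex.ofReal_ne_zero.mpr hl'.ne'
  have haC' : (a':ℂ) ≠ 0 := Complex.ofReal_ne_zero.mpr ha'.ne'
  have hcC' : (c':ℂ) ≠ 0 := Complex.ofReal_ne_zero.mpr hc'.ne'
  have hbC' : (b':ℂ) ≠ 0 := Complex.ofReal_ne_zero.mpr hb'.ne'
  -- unit edge directions
  set u0 : ℂ := (B - A) / (ℓ:ℂ) with hu0
  set u1 : ℂ := (C - B) / (a:ℂ) with hu1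
  set u2 : ℂ := (D - C) / (c:ℂ) with hu2
  set u3 : ℂ := (A - D) / (b:ℂ) with hu3
  set u0' : ℂ := (B' - A') / (ℓ':ℂ) with hu0'
  set u1' : ℂ := (C' - B') / (a':ℂ) with hu1'
  set u2' : ℂ := (D' - C') / (c':ℂ) with hu2'
  set u3' : ℂ := (A' - D') / (b':ℂ) with hu3'
  have h0 : B - A = (ℓ:ℂ) * u0 := by rw [hu0]; field_simp
  have h1 : C - B = (a:ℂ) * u1 := by rw [hu1]; field_simp
  have h2 : D - C = (c:ℂ) * u2 := by rw [hu2]; field_simp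
  have h3 : A - D = (b:ℂ) * u3 := by rw [hu3]; field_simp
  have h0' : B' - A' = (ℓ':ℂ) * u0' := by rw [hu0']; field_simp
  have h1' : C' - B' = (a':ℂ) * u1' := by rw [hu1']; field_simp
  have h2' : D' - C' = (c':ℂ) * u2' := by rw [hu2']; field_simp
  have h3' : A' - D' = (b':ℂ) * u3' := by rw [hu3']; field_simp
  have ab0 : Complex.abs u0 = 1 := by
    rw [hu0, map_div₀, Complex.abs_ofReal, ← hld, abs_of_pos hl, div_self hl.ne']
  have ab1 : Complex.abs u1 = 1 := by
    rw [hu1, map_div₀, Complex.abs_ofReal, ← had, abs_of_pos ha, div_self ha.ne']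
  have ab2 : Complex.abs u2 = 1 := by
    rw [hu2, map_div₀, Complex.abs_ofReal, ← hcd, abs_of_pos hc, div_self hc.ne']
  have ab3 : Complex.abs u3 = 1 := by
    rw [hu3, map_div₀, Complex.abs_ofReal, ← hbd, abs_of_pos hb, div_self hb.ne']
  have ab0' : Complex.abs u0' = 1 := by
    rw [hu0', map_div₀, Complex.abs_ofReal, ← hld', abs_of_pos hl', div_self hl'.ne']
  have ab1' : Complex.abs u1' = 1 := by
    rw [hu1', map_div₀, Complex.abs_ofReal, ← had', abs_of_pos ha', div_self ha'.ne']
  have ab2' : Complex.abs u2' = 1 := by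
    rw [hu2', map_div₀, Complex.abs_ofReal, ← hcd', abs_of_pos hc', div_self hc'.ne']
  have ab3' : Complex.abs u3' = 1 := by
    rw [hu3', map_div₀, Complex.abs_ofReal, ← hbd', abs_of_pos hb', div_self hb'.ne']
  have n0 : u0 * (starRingEnd ℂ) u0 = 1 := by
    rw [Complex.mul_conj, Complex.normSq_eq_abs, ab0]; norm_num
  have n1 : u1 * (starRingEnd ℂ) u1 = 1 := by
    rw [Complex.mul_conj, Complex.normSq_eq_abs, ab1]; norm_num
  have n2 : u2 * (starRingEnd ℂ) u2 = 1 := by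
    rw [Complex.mul_conj, Complex.normSq_eq_abs, ab2]; norm_num
  have n0' : u0' * (starRingEnd ℂ) u0' = 1 := by
    rw [Complex.mul_conj, Complex.normSq_eq_abs, ab0']; norm_num
  have n1' : u1' * (starRingEnd ℂ) u1' = 1 := by
    rw [Complex.mul_conj, Complex.normSq_eq_abs, ab1']; norm_num
  -- simplify the dir_eq equalities
  have sv0 : (starRingEnd ℂ) (B - A) * (D - A) / ((ℓ * b : ℝ) : ℂ)
      = -((starRingEnd ℂ) u0 * u3) := by
    rw [hu0, hu3, map_div₀, Complex.conj_ofReal]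
    push_cast
    field_simp
    ring
  have sw0 : (starRingEnd ℂ) (B' - A') * (D' - A') / ((ℓ' * b' : ℝ) : ℂ)
      = -((starRingEnd ℂ) u0' * u3') := by
    rw [hu0', hu3', map_div₀, Complex.conj_ofReal]
    push_cast
    field_simp
    ring
  have sv1 : (starRingEnd ℂ) (C - B) * (A - B) / ((a * ℓ : ℝ) : ℂ)
      = -((starRingEnd ℂ) u1 * u0) := by
    rw [hu1, hu0, map_div₀, Complex.conj_ofReal]
    push_cast
    field_simp
    ring
  have sw1 : (starRingEnd ℂ) (C' - B') * (A' - B') / ((a' * ℓ' : ℝ) : ℂ)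
      = -((starRingEnd ℂ) u1' * u0') := by
    rw [hu1', hu0', map_div₀, Complex.conj_ofReal]
    push_cast
    field_simp
    ring
  have sv2 : (starRingEnd ℂ) (D - C) * (B - C) / ((c * a : ℝ) : ℂ)
      = -((starRingEnd ℂ) u2 * u1) := by
    rw [hu2, hu1, map_div₀, Complex.conj_ofReal]
    push_cast
    field_simp
    ring
  have sw2 : (starRingEnd ℂ) (D' - C') * (B' - C') / ((c' * a' : ℝ) : ℂ)
      = -((starRingEnd ℂ) u2' * u1') := by
    rw [hu2', hu1', map_div₀, Complex.conj_ofReal]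
    push_cast
    field_simp
    ring
  clear_value u0 u1 u2 u3 u0' u1' u2' u3' ℓ a c b ℓ' a' c' b'
  rw [sv0, sw0] at Eq0
  rw [sv1, sw1] at Eq1
  rw [sv2, sw2] at Eq2
  have E0 : (starRingEnd ℂ) u0 * u3 = (starRingEnd ℂ) u0' * u3' := neg_inj.mp Eq0
  have E1 : (starRingEnd ℂ) u1 * u0 = (starRingEnd ℂ) u1' * u0' := neg_inj.mp Eq1
  have E2 : (starRingEnd ℂ) u2 * u1 = (starRingEnd ℂ) u2' * u1' := neg_inj.mp Eq2
  have E1c : u1 * (starRingEnd ℂ) u0 = u1' * (starRingEnd ℂ) u0' := by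
    have := congrArg (starRingEnd ℂ) E1
    simpa [map_mul, Complex.conj_conj] using this
  have E2c : u2 * (starRingEnd ℂ) u1 = u2' * (starRingEnd ℂ) u1' := by
    have := congrArg (starRingEnd ℂ) E2
    simpa [map_mul, Complex.conj_conj] using this
  set μ : ℂ := u0' * (starRingEnd ℂ) u0 with hμd
  clear_value μ
  have hμabs : Complex.abs μ = 1 := by
    rw [hμd, map_mul, Complex.abs_conj, ab0, ab0']; norm_num
  have m0 : u0' = μ * u0 := by rw [hμd]; linear_combination (-u0') * n0
  have m1 : u1' = μ * u1 := by
    rw [hμd]; linear_combination (-u0') * E1c - u1' * n0'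
  have m3 : u3' = μ * u3 := by
    rw [hμd]; linear_combination (-u0') * E0 - u3' * n0'
  have m2 : u2' = μ * u2 := by
    rw [hμd] at m1 ⊢
    linear_combination (-u2') * n1' + (-u1') * E2c + (u2 * (starRingEnd ℂ) u1) * m1
      + (u0' * (starRingEnd ℂ) u0 * u2) * n1
  -- closure relations
  have clos_v : (ℓ:ℂ) * u0 + (a:ℂ) * u1 + (c:ℂ) * u2 + (b:ℂ) * u3 = 0 := by
    rw [← h0, ← h1, ← h2, ← h3]; ring
  have clos_w : (ℓ':ℂ) * u0' + (a':ℂ) * u1' + (c':ℂ) * u2' + (b':ℂ) * u3' = 0 := by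
    rw [← h0', ← h1', ← h2', ← h3']; ring
  have hll : ℓ' = ℓ := hside.symm
  have hμne : μ ≠ 0 := by
    intro h; rw [h] at hμabs; simp at hμabs
  have clos_w2 : (ℓ:ℂ) * u0 + (a':ℂ) * u1 + (c':ℂ) * u2 + (b':ℂ) * u3 = 0 := by
    have hmul : μ * ((ℓ:ℂ) * u0 + (a':ℂ) * u1 + (c':ℂ) * u2 + (b':ℂ) * u3) = 0 := by
      rw [hll, m0, m1, m2, m3] at clos_w
      linear_combination clos_w
    rcases mul_eq_zero.1 hmul with h | h
    · exact absurd h hμne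
    · exact h
  set x : ℝ := a - a' with hxd
  set y : ℝ := c - c' with hyd
  set z : ℝ := b - b' with hzd
  clear_value x y z
  have diff : (x:ℂ) * u1 + (y:ℂ) * u2 + (z:ℂ) * u3 = 0 := by
    rw [hxd, hyd, hzd]
    push_cast
    linear_combination clos_v - clos_w2
  set S : ℂ := u1 * (starRingEnd ℂ) u2 with hSd
  set T : ℂ := u3 * (starRingEnd ℂ) u2 with hTd
  clear_value S T
  have meq : (x:ℂ) * S + (y:ℂ) + (z:ℂ) * T = 0 := by
    rw [hSd, hTd]
    linear_combination ((starRingEnd ℂ) u2) * diff - (y:ℂ) * n2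
  have hre : x * S.re + y + z * T.re = 0 := by
    have := congrArg Complex.re meq
    simpa [Complex.add_re, Complex.mul_re, Complex.ofReal_re, Complex.ofReal_im] using this
  have him : x * S.im + z * T.im = 0 := by
    have := congrArg Complex.im meq
    simpa [Complex.add_im, Complex.mul_im, Complex.ofReal_re, Complex.ofReal_im] using this
  have hSabs : Complex.abs S = 1 := by rw [hSd, map_mul, Complex.abs_conj, ab1, ab2]; norm_num
  have hTabs : Complex.abs T = 1 := by rw [hTd, map_mul, Complex.abs_conj, ab3, ab2]; norm_num
  -- sign of S.im
  have cu12 : 0 < ((starRingEnd ℂ) u1 * u2).im := by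
    rw [h1, h2] at cv1
    have e : (starRingEnd ℂ) ((a:ℂ) * u1) * ((c:ℂ) * u2)
        = ((a*c : ℝ):ℂ) * ((starRingEnd ℂ) u1 * u2) := by
      rw [map_mul, Complex.conj_ofReal]; push_cast; ring
    rw [e] at cv1
    rw [Complex.im_ofReal_mul] at cv1
    exact (mul_pos_iff_of_pos_left (mul_pos ha hc)).mp cv1
  have cu23 : 0 < ((starRingEnd ℂ) u2 * u3).im := by
    rw [h2, h3] at cv2
    have e : (starRingEnd ℂ) ((c:ℂ) * u2) * ((b:ℂ) * u3)
        = ((c*b : ℝ):ℂ) * ((starRingEnd ℂ) u2 * u3) := by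
      rw [map_mul, Complex.conj_ofReal]; push_cast; ring
    rw [e] at cv2
    rw [Complex.im_ofReal_mul] at cv2
    exact (mul_pos_iff_of_pos_left (mul_pos hc hb)).mp cv2
  have hSim : S.im < 0 := by
    have e : S.im = -(((starRingEnd ℂ) u1 * u2).im) := by
      rw [hSd]; simp [Complex.mul_im]; ring
    rw [e]; linarith
  have hTim : 0 < T.im := by
    have e : T.im = ((starRingEnd ℂ) u2 * u3).im := by
      rw [hTd]; simp [Complex.mul_im]; ring
    rw [e]; exact cu23
  have hsum : x + y + z = 0 := by
    rw [hxd, hyd, hzd]; rw [hll] at hper; linarith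
  obtain ⟨hx0, hy0, hz0⟩ := kernel (unit_sq hSabs) (unit_sq hTabs) hSim hTim hre him hsum
  have haa : a' = a := by rw [hxd] at hx0; linarith
  have hcc : c' = c := by rw [hyd] at hy0; linarith
  have hbb : b' = b := by rw [hzd] at hz0; linarith
  rw [hll] at h0'; rw [haa] at h1'; rw [hcc] at h2'; rw [hbb] at h3'
  refine ⟨μ, A' - μ * A, hμabs, by ring, ?_, ?_, ?_⟩
  · linear_combination h0' - μ * h0 + (ℓ:ℂ) * m0
  · linear_combination h0' + h1' - μ * h0 - μ * h1 + (ℓ:ℂ) * m0 + (a:ℂ) * m1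
  · linear_combination -h3' + μ * h3 - (b:ℂ) * m3

private lemma angle_map {E F : Type*} [NormedAddCommGroup E] [InnerProductSpace ℝ E]
    [NormedAddCommGroup F] [InnerProductSpace ℝ F] (f : E ≃ₗᵢ[ℝ] F) (x y : E) :
    InnerProductGeometry.angle (f x) (f y) = InnerProductGeometry.angle x y := by
  unfold InnerProductGeometry.angle
  rw [LinearIsometryEquiv.inner_map_map]
  simp

private noncomputable def affC (μ t : ℂ) (h : Complex.abs μ = 1) : ℂ ≃ᵢ ℂ where
  toFun z := μ * z + t
  invFun z := (z - t) / μ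
  left_inv z := by
    have hμ : μ ≠ 0 := by intro h0; rw [h0] at h; simp at h
    field_simp
    ring
  right_inv z := by
    have hμ : μ ≠ 0 := by intro h0; rw [h0] at h; simp at h
    field_simp
    ring
  isometry_toFun := Isometry.of_dist_eq fun x y => by
    rw [Complex.dist_eq, Complex.dist_eq, show μ*x + t - (μ*y + t) = μ * (x - y) by ring,
      norm_mul, Complex.norm_eq_abs μ, h, one_mul]

end QuadAux

/-- A convex quadrilateral is determined up to congruence by its four interior
angles (in cyclic order), the length of one specified side, and its perimeter. -/
theorem convex_quadrilateral_congruent (v w : Fin 4 → EuclideanSpace ℝ (Fin 2))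
    (hv : IsConvexPolygon v) (hw : IsConvexPolygon w)
    (hang : ∀ j : Fin 4,
      EuclideanGeometry.angle (v (j - 1)) (v j) (v (j + 1)) =
        EuclideanGeometry.angle (w (j - 1)) (w j) (w (j + 1)))
    (hside : dist (v 0) (v 1) = dist (w 0) (w 1))
    (hper : ∑ j : Fin 4, dist (v j) (v (j + 1)) = ∑ j : Fin 4, dist (w j) (w (j + 1))) :
    ∃ f : EuclideanSpace ℝ (Fin 2) ≃ᵢ EuclideanSpace ℝ (Fin 2), ∀ j, f (v j) = w j := by
  obtain ⟨-, hv2⟩ := hv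
  obtain ⟨-, hw2⟩ := hw
  have c0 : 0 < cross2 (v 1 - v 0) (v 2 - v 1) := hv2 0
  have c1 : 0 < cross2 (v 2 - v 1) (v 3 - v 2) := hv2 1
  have c2 : 0 < cross2 (v 3 - v 2) (v 0 - v 3) := hv2 2
  have c3 : 0 < cross2 (v 0 - v 3) (v 1 - v 0) := hv2 3
  have d0 : 0 < cross2 (w 1 - w 0) (w 2 - w 1) := hw2 0
  have d1 : 0 < cross2 (w 2 - w 1) (w 3 - w 2) := hw2 1
  have d3 : 0 < cross2 (w 0 - w 3) (w 1 - w 0) := hw2 3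
  have hA0 : EuclideanGeometry.angle (v 3) (v 0) (v 1)
      = EuclideanGeometry.angle (w 3) (w 0) (w 1) := hang 0
  have hA1 : EuclideanGeometry.angle (v 0) (v 1) (v 2)
      = EuclideanGeometry.angle (w 0) (w 1) (w 2) := hang 1
  have hA2 : EuclideanGeometry.angle (v 1) (v 2) (v 3)
      = EuclideanGeometry.angle (w 1) (w 2) (w 3) := hang 2
  have hP : dist (v 0) (v 1) + dist (v 1) (v 2) + dist (v 2) (v 3) + dist (v 3) (v 0)
      = dist (w 0) (w 1) + dist (w 1) (w 2) + dist (w 2) (w 3) + dist (w 3) (w 0) := by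
    have h := hper
    rw [Fin.sum_univ_four, Fin.sum_univ_four] at h
    exact h
  clear hang hper hv2 hw2
  set φ := Complex.isometryOfOrthonormal (EuclideanSpace.basisFun (Fin 2) ℝ) with hφ
  have coord : ∀ z : ℂ, φ z 0 = z.re ∧ φ z 1 = z.im := by
    intro z
    rw [hφ, Complex.isometryOfOrthonormal_apply]
    simp [EuclideanSpace.basisFun_apply, EuclideanSpace.single_apply]
  have crossC : ∀ x y : EuclideanSpace ℝ (Fin 2),
      cross2 x y = ((starRingEnd ℂ) (φ.symm x) * (φ.symm y)).im := by
    intro x y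
    have hx := φ.apply_symm_apply x
    have hy := φ.apply_symm_apply y
    rw [cross2, ← hx, ← hy, (coord _).1, (coord _).2, (coord _).1, (coord _).2, Complex.mul_im]
    simp
    ring
  have distC : ∀ x y : EuclideanSpace ℝ (Fin 2),
      dist x y = Complex.abs (φ.symm x - φ.symm y) := by
    intro x y
    rw [← Complex.norm_eq_abs, ← Complex.dist_eq, LinearIsometryEquiv.dist_map]
  have angC : ∀ x₁ y₁ z₁ x₂ y₂ z₂ : EuclideanSpace ℝ (Fin 2),
      EuclideanGeometry.angle x₁ y₁ z₁ = EuclideanGeometry.angle x₂ y₂ z₂ →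
      InnerProductGeometry.angle (φ.symm x₁ - φ.symm y₁) (φ.symm z₁ - φ.symm y₁)
        = InnerProductGeometry.angle (φ.symm x₂ - φ.symm y₂) (φ.symm z₂ - φ.symm y₂) := by
    intro x₁ y₁ z₁ x₂ y₂ z₂ h
    rw [← map_sub, ← map_sub, ← map_sub, ← map_sub, QuadAux.angle_map, QuadAux.angle_map]
    exact h
  obtain ⟨μ, t, hμ, hA, hB, hC, hD⟩ :=
    QuadAux.keyC (φ.symm (v 0)) (φ.symm (v 1)) (φ.symm (v 2)) (φ.symm (v 3))
      (φ.symm (w 0)) (φ.symm (w 1)) (φ.symm (w 2)) (φ.symm (w 3))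
      (by rw [← map_sub, ← map_sub, ← crossC]; exact c0)
      (by rw [← map_sub, ← map_sub, ← crossC]; exact c1)
      (by rw [← map_sub, ← map_sub, ← crossC]; exact c2)
      (by rw [← map_sub, ← map_sub, ← crossC]; exact c3)
      (by rw [← map_sub, ← map_sub, ← crossC]; exact d0)
      (by rw [← map_sub, ← map_sub, ← crossC]; exact d1)
      (by rw [← map_sub, ← map_sub, ← crossC]; exact d3)
      (angC _ _ _ _ _ _ hA0) (angC _ _ _ _ _ _ hA1) (angC _ _ _ _ _ _ hA2)
      (by rw [← distC, ← distC, dist_comm (v 1) (v 0), dist_comm (w 1) (w 0)]; exact hside)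
      (by
        rw [← distC, ← distC, ← distC, ← distC, ← distC, ← distC, ← distC, ← distC,
          dist_comm (v 1) (v 0), dist_comm (v 2) (v 1), dist_comm (v 3) (v 2),
          dist_comm (v 0) (v 3), dist_comm (w 1) (w 0), dist_comm (w 2) (w 1),
          dist_comm (w 3) (w 2), dist_comm (w 0) (w 3)]
        exact hP)
  have key : ∀ j : Fin 4, φ.symm (w j) = μ * φ.symm (v j) + t := by
    intro j
    fin_cases j
    · exact hA
    · exact hB
    · exact hC
    · exact hD
  refine ⟨(φ.symm.toIsometryEquiv.trans ((QuadAux.affC μ t hμ).trans φ.toIsometryEquiv)), ?_⟩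
  intro j
  show φ (μ * φ.symm (v j) + t) = w j
  rw [← key j]
  exact φ.apply_symm_apply (w j)
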